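/- For every n ≥ 1 there exists a regular language L over a three-letter alphabet with quotient complexity κ(L) = n and syntactic complexity σ(L) = n^n; that is, the upper bound n^n on syntactic complexity is tight for alphabets of at least three letters. -/

import Mathlib

/-- The left quotient of a language `L` by a word `w`: `{x | w ++ x ∈ L}`. -/
def leftQ {α : Type*} (L : Set (List α)) (w : List α) : Set (List α) :=
  {x | w ++ x ∈ L}

/-- Quotient (state) complexity: the number of distinct left quotients of `L`. -/
noncomputable def quotCompl {α : Type*} (L : Set (List α)) : ℕ :=
  Nat.card (Set.range (leftQ L))

/-- The syntactic (Myhill) congruence of `L`. -/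
def synRel {α : Type*} (L : Set (List α)) (x y : List α) : Prop :=
  ∀ u v : List α, u ++ x ++ v ∈ L ↔ u ++ y ++ v ∈ L

/-- The syntactic setoid on the free semigroup of non-empty words. -/
def synSetoid {α : Type*} (L : Set (List α)) : Setoid {w : List α // w ≠ []} :=
  ⟨fun x y => synRel L x.1 y.1,
   ⟨fun _ _ _ => Iff.rfl, fun h u v => (h u v).symm,
    fun h₁ h₂ u v => (h₁ u v).trans (h₂ u v)⟩⟩

/-- Syntactic complexity: the cardinality of the syntactic semigroup of `L`. -/
noncomputable def synCompl {α : Type*} (L : Set (List α)) : ℕ :=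
  Nat.card (Quotient (synSetoid L))


namespace Stmt2Aux

/-- The three generator transformations on `Fin (m+1)`. -/
def phi (m : ℕ) : Fin 3 → Fin (m+1) → Fin (m+1) := fun l =>
  if l = 0 then (fun i => i + 1)
  else if l = 1 then ⇑(Equiv.swap (0 : Fin (m+1)) 1)
  else (fun i => if i = 1 then 0 else i)

/-- Action of a word (read left to right) on states. -/
def evalW (m : ℕ) : List (Fin 3) → Fin (m+1) → Fin (m+1)
  | [] => id
  | l :: w => evalW m w ∘ phi m l

theorem evalW_append (m : ℕ) (u v : List (Fin 3)) :
    evalW m (u ++ v) = evalW m v ∘ evalW m u := by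
  induction u with
  | nil => rfl
  | cons l u ih => simp [evalW, ih, Function.comp_assoc]

/-- Transformations realized by nonempty words. -/
def T (m : ℕ) : Set (Fin (m+1) → Fin (m+1)) := {f | ∃ w, w ≠ [] ∧ evalW m w = f}

theorem comp_mem {m : ℕ} {f g : Fin (m+1) → Fin (m+1)} (hf : f ∈ T m) (hg : g ∈ T m) :
    g ∘ f ∈ T m := by
  obtain ⟨wf, hwf, rfl⟩ := hf
  obtain ⟨wg, hwg, rfl⟩ := hg
  exact ⟨wf ++ wg, by simp [hwf], (evalW_append m wf wg)⟩

theorem rot_mem (m : ℕ) : (fun i : Fin (m+1) => i + 1) ∈ T m :=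
  ⟨[0], by simp, by funext i; simp [evalW, phi]⟩

theorem swap_mem (m : ℕ) : ⇑(Equiv.swap (0 : Fin (m+1)) 1) ∈ T m :=
  ⟨[1], by simp, by funext i; simp [evalW, phi]⟩

theorem gam_mem (m : ℕ) : (fun i : Fin (m+1) => if i = 1 then 0 else i) ∈ T m :=
  ⟨[2], by simp, by funext i; simp [evalW, phi]⟩

open Fin.NatCast Fin.CommRing in
theorem evalW_replicate (m k : ℕ) :
    evalW m (List.replicate k 0) = fun i => i + (k : Fin (m+1)) := by
  induction k with
  | zero => funext i; simp [evalW]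
  | succ k ih =>
    funext i
    have : (List.replicate (k+1) (0 : Fin 3)) = 0 :: List.replicate k 0 := rfl
    rw [this]
    simp only [evalW, Function.comp_apply, ih, phi, if_pos rfl]
    push_cast
    ring

open Fin.NatCast in
theorem id_mem (m : ℕ) : id ∈ T m := by
  refine ⟨List.replicate (m+1) 0, by simp, ?_⟩
  rw [evalW_replicate]
  funext i
  simp [Fin.natCast_self]

/-- The subgroup of permutations realized (together with inverse) by `T`. -/
def G (m : ℕ) : Subgroup (Equiv.Perm (Fin (m+1))) where
  carrier := {g | ⇑g ∈ T m ∧ ⇑g⁻¹ ∈ T m}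
  one_mem' := ⟨id_mem m, by simpa using id_mem m⟩
  mul_mem' := fun {a b} ha hb =>
    ⟨by rw [Equiv.Perm.coe_mul]; exact comp_mem hb.1 ha.1,
     by rw [mul_inv_rev, Equiv.Perm.coe_mul]; exact comp_mem ha.2 hb.2⟩
  inv_mem' := fun {a} ha => ⟨ha.2, by simpa using ha.1⟩

open Fin.NatCast in
theorem rot_inv_mem (k : ℕ) : ⇑(finRotate (k+2))⁻¹ ∈ T (k+1) := by
  have h : ⇑(finRotate (k+2))⁻¹ = evalW (k+1) (List.replicate (k+1) 0) := by
    funext i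
    apply (finRotate (k+2)).injective
    rw [Equiv.Perm.inv_def, Equiv.apply_symm_apply, evalW_replicate, finRotate_succ_apply]
    have h2 : ((k+1 : ℕ) : Fin (k+2)) + 1 = 0 := by
      rw [show (1 : Fin (k+2)) = ((1:ℕ) : Fin (k+2)) by simp, ← Nat.cast_add,
        Fin.natCast_self]
    rw [add_assoc, h2, add_zero]
  exact ⟨List.replicate (k+1) 0, by simp, h.symm⟩

theorem perm_mem (m : ℕ) (g : Equiv.Perm (Fin (m+1))) : ⇑g ∈ T m := by
  suffices h : G m = ⊤ by
    have : g ∈ G m := by rw [h]; trivial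
    exact this.1
  cases m with
  | zero =>
    ext g
    simp only [Subgroup.mem_top, iff_true]
    have : g = 1 := Equiv.ext fun i => Subsingleton.elim (α := Fin 1) _ _
    rw [this]; exact (G 0).one_mem
  | succ k =>
    have h1 : (finRotate (k+2)).IsCycle := isCycle_finRotate
    have h2 : (finRotate (k+2)).support = Finset.univ := support_finRotate
    have hc := Equiv.Perm.closure_cycle_adjacent_swap h1 h2 0
    rw [finRotate_succ_apply, zero_add] at hc
    rw [eq_top_iff, ← hc, Subgroup.closure_le]
    rintro x (rfl | rfl)
    · refine ⟨?_, rot_inv_mem k⟩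
      have : ⇑(finRotate (k+2)) = fun i : Fin (k+2) => i + 1 := by
        funext i; rw [finRotate_succ_apply]
      rw [this]; exact rot_mem (k+1)
    · refine ⟨swap_mem (k+1), ?_⟩
      rw [Equiv.swap_inv]; exact swap_mem (k+1)

/-- Every "merge" map (send `b` to `a`, fix the rest) is realized. -/
theorem merge_mem (m : ℕ) (a b : Fin (m+1)) :
    (fun i => if i = b then a else i) ∈ T m := by
  rcases eq_or_ne a b with rfl | hab
  · have : (fun i : Fin (m+1) => if i = a then a else i) = id := by
      funext i; split <;> simp_all
    rw [this]; exact id_mem m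
  · -- a permutation `g` with `g a = 0`, `g b = 1`
    have h01 : (0 : Fin (m+1)) ≠ 1 := by
      cases m with
      | zero => exact absurd (Subsingleton.elim (α := Fin 1) a b) hab
      | succ k => simp
    set a' : Fin (m+1) := Equiv.swap a 0 b with ha'
    have ha'0 : a' ≠ 0 := by
      intro h
      apply hab
      have := (Equiv.swap a 0).injective (h.trans (Equiv.swap_apply_left a 0).symm)
      exact this.symm
    set g : Equiv.Perm (Fin (m+1)) := (Equiv.swap a' 1) * (Equiv.swap a 0) with hg
    have hga : g a = 0 := by
      simp only [hg, Equiv.Perm.mul_apply, Equiv.swap_apply_left]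
      exact Equiv.swap_apply_of_ne_of_ne (Ne.symm ha'0) h01
    have hgb : g b = 1 := by
      simp only [hg, Equiv.Perm.mul_apply, ← ha', Equiv.swap_apply_left]
    have key : (fun i => if i = b then a else i)
        = ⇑g⁻¹ ∘ (fun i : Fin (m+1) => if i = 1 then 0 else i) ∘ ⇑g := by
      funext i
      rcases eq_or_ne i b with rfl | hib
      · simp only [Function.comp_apply, hgb, if_true, ite_true]
        rw [← hga, Equiv.Perm.inv_def, Equiv.symm_apply_apply]
      · simp only [Function.comp_apply, if_neg hib]
        have : g i ≠ 1 := fun h => hib (g.injective (h.trans hgb.symm))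
        rw [if_neg this, Equiv.Perm.inv_def, Equiv.symm_apply_apply]
    rw [key]
    exact comp_mem (comp_mem (perm_mem m g) (gam_mem m)) (perm_mem m g⁻¹)

theorem all_mem (m : ℕ) (f : Fin (m+1) → Fin (m+1)) : f ∈ T m := by
  suffices h : ∀ j (f : Fin (m+1) → Fin (m+1)),
      m + 1 - (Finset.image f Finset.univ).card ≤ j → f ∈ T m by
    exact h (m+1) f (by omega)
  intro j
  induction j with
  | zero =>
    intro f hf
    have hcard : (Finset.image f Finset.univ).card = m + 1 := by
      have := Finset.card_le_univ (Finset.image f Finset.univ)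
      simp only [Finset.card_univ, Fintype.card_fin] at this
      omega
    have hsurj : Function.Surjective f := by
      intro y
      have h := Finset.eq_univ_of_card (Finset.image f Finset.univ) (by simp [hcard])
      have : y ∈ Finset.image f Finset.univ := by rw [h]; exact Finset.mem_univ y
      simpa using this
    have hbij : Function.Bijective f := Finite.surjective_iff_bijective.mp hsurj
    have : f = ⇑(Equiv.ofBijective f hbij) := rfl
    rw [this]; exact perm_mem m _
  | succ j ih =>
    intro f hf
    by_cases hsurj : Function.Surjective f
    · have hbij : Function.Bijective f := Finite.surjective_iff_bijective.mp hsurj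
      have : f = ⇑(Equiv.ofBijective f hbij) := rfl
      rw [this]; exact perm_mem m _
    · have hninj : ¬ Function.Injective f := fun h =>
        hsurj (Finite.injective_iff_surjective.mp h)
      obtain ⟨a, b, hfab, hab⟩ : ∃ a b, f a = f b ∧ a ≠ b := by
        simp only [Function.Injective, not_forall] at hninj
        obtain ⟨a, b, h1, h2⟩ := hninj
        exact ⟨a, b, h1, h2⟩
      obtain ⟨c, hc⟩ : ∃ c, c ∉ Finset.image f Finset.univ := by
        by_contra h
        push_neg at h
        exact hsurj fun y => by simpa using h y
      set g := Function.update f b c with hgdef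
      have himg : Finset.image g Finset.univ = insert c (Finset.image f Finset.univ) := by
        ext y
        simp only [Finset.mem_image, Finset.mem_univ, true_and, Finset.mem_insert]
        constructor
        · rintro ⟨x, rfl⟩
          rcases eq_or_ne x b with rfl | hxb
          · left; simp [hgdef]
          · right; exact ⟨x, by simp [hgdef, Function.update_of_ne hxb]⟩
        · rintro (rfl | ⟨x, rfl⟩)
          · exact ⟨b, by simp [hgdef]⟩
          · rcases eq_or_ne x b with rfl | hxb
            · exact ⟨a, by rw [hgdef, Function.update_of_ne hab, hfab]⟩
            · exact ⟨x, by simp [hgdef, Function.update_of_ne hxb]⟩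
      have hcardg : (Finset.image g Finset.univ).card
          = (Finset.image f Finset.univ).card + 1 := by
        rw [himg, Finset.card_insert_of_notMem hc]
      have hg : g ∈ T m := ih g (by omega)
      have hfeq : f = g ∘ (fun i => if i = b then a else i) := by
        funext i
        rcases eq_or_ne i b with rfl | hib
        · simp only [Function.comp_apply, if_true, ite_true]
          rw [hgdef, Function.update_of_ne hab]
          exact hfab.symm
        · simp [hgdef, hib, Function.update_of_ne hib]
      rw [hfeq]
      exact comp_mem (merge_mem m a b) hg

end Stmt2Aux

open Stmt2Aux in
theorem stmt_2 (n : ℕ) (hn : 1 ≤ n) :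
    ∃ L : Set (List (Fin 3)), (Set.range (leftQ L)).Finite ∧
      quotCompl L = n ∧ synCompl L = n ^ n := by
  obtain ⟨m, rfl⟩ : ∃ m, n = m + 1 := ⟨n - 1, by omega⟩
  set L : Set (List (Fin 3)) := {w | evalW m w 0 = 0} with hLdef
  have hall : ∀ f : Fin (m+1) → Fin (m+1), ∃ w, w ≠ [] ∧ evalW m w = f :=
    fun f => all_mem m f
  have hL : ∀ w, w ∈ L ↔ evalW m w 0 = 0 := fun w => Iff.rfl
  have happ : ∀ (u v : List (Fin 3)) (q : Fin (m+1)),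
      evalW m (u ++ v) q = evalW m v (evalW m u q) := by
    intro u v q; rw [evalW_append]; rfl
  -- the "exit word" distinguishing two distinct states
  have hdist : ∀ {j k : Fin (m+1)}, j ≠ k →
      ∃ v : List (Fin 3), evalW m v j = 0 ∧ evalW m v k ≠ 0 := by
    intro j k hjk
    have h01 : (0 : Fin (m+1)) ≠ 1 := by
      cases m with
      | zero => exact absurd (Subsingleton.elim (α := Fin 1) j k) hjk
      | succ k => simp
    obtain ⟨v, -, hv⟩ := hall (fun t => if t = j then 0 else 1)
    refine ⟨v, ?_, ?_⟩
    · rw [hv]; simp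
    · rw [hv]; simp only [if_neg (Ne.symm hjk)]; exact h01.symm
  set Q : Fin (m+1) → Set (List (Fin 3)) := fun q => {x | evalW m x q = 0} with hQdef
  have hleftQ : ∀ w, leftQ L w = Q (evalW m w 0) := by
    intro w
    ext x
    simp only [leftQ, hQdef, Set.mem_setOf_eq, hL, happ]
  have hrange : Set.range (leftQ L) = Set.range Q := by
    ext S
    constructor
    · rintro ⟨w, rfl⟩; exact ⟨evalW m w 0, (hleftQ w).symm⟩
    · rintro ⟨q, rfl⟩
      obtain ⟨w, -, hw⟩ := hall (fun _ => q)
      exact ⟨w, by rw [hleftQ, hw]⟩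
  have hQinj : Function.Injective Q := by
    intro j k h
    by_contra hjk
    obtain ⟨v, hv0, hv1⟩ := hdist hjk
    have hj : v ∈ Q j := hv0
    have hk : v ∈ Q k := h ▸ hj
    exact hv1 hk
  refine ⟨L, ?_, ?_, ?_⟩
  · rw [hrange]; exact Set.finite_range Q
  · rw [quotCompl, hrange, Nat.card_range_of_injective hQinj,
      Nat.card_eq_fintype_card, Fintype.card_fin]
  · -- syntactic complexity
    have hkey : ∀ x y : List (Fin 3), synRel L x y → evalW m x = evalW m y := by
      intro x y h
      funext i
      by_contra hne
      obtain ⟨v, hv0, hv1⟩ := hdist hne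
      obtain ⟨u, -, hu⟩ := hall (fun _ => i)
      have hx : u ++ x ++ v ∈ L := by
        rw [hL, happ, happ, hu]; exact hv0
      have hy := (h u v).mp hx
      rw [hL, happ, happ, hu] at hy
      exact hv1 hy
    set F : Quotient (synSetoid L) → (Fin (m+1) → Fin (m+1)) :=
      Quotient.lift (fun w : {w : List (Fin 3) // w ≠ []} => evalW m w.1)
        (fun x y hxy => hkey x.1 y.1 hxy) with hFdef
    have hbij : Function.Bijective F := by
      constructor
      · intro q1 q2
        refine Quotient.inductionOn₂ q1 q2 ?_
        intro x y h
        apply Quotient.sound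
        intro u v
        have hx : evalW m x.1 = evalW m y.1 := h
        rw [hL, hL, happ, happ, happ, happ, hx]
      · intro f
        obtain ⟨w, hw, hwe⟩ := hall f
        exact ⟨Quotient.mk _ ⟨w, hw⟩, hwe⟩
    rw [synCompl, Nat.card_eq_of_bijective F hbij, Nat.card_eq_fintype_card]
    simp
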